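/- Let G = (V, E) be a finite connected simple graph, let β > 0, and let (λ_u)_{u ∈ V} be independent random variables, each exponentially distributed with rate β. For each vertex w, call u ∈ V a center of w if u minimizes u' ↦ dist(u', w) − λ(u') over V. Then for every vertex v and every integer k ≥ 0, with probability at least 1 − 2βk there is a single vertex u that is the unique center of every vertex w with dist(v, w) ≤ k. -/

import Mathlib

open MeasureTheory ProbabilityTheory Filter


/-- The upper tail at `Ici` of an exponential r.v. -/
lemma mpx_tail_Ici {Ω : Type*} [MeasurableSpace Ω] (μ : Measure Ω) [IsProbabilityMeasure μ]
    (β : ℝ) (hβ : 0 < β) (X : Ω → ℝ)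
    (hexpX : ∀ t : ℝ, 0 ≤ t → μ {ω | t < X ω} = ENNReal.ofReal (Real.exp (-β * t)))
    (y : ℝ) : μ {ω | y ≤ X ω} ≤ ENNReal.ofReal (Real.exp (-β * y)) := by
  rcases le_or_gt y 0 with hy | hy
  · calc μ {ω | y ≤ X ω} ≤ 1 := prob_le_one
    _ = ENNReal.ofReal 1 := ENNReal.ofReal_one.symm
    _ ≤ ENNReal.ofReal (Real.exp (-β * y)) := by
        apply ENNReal.ofReal_le_ofReal
        apply Real.one_le_exp
        nlinarith
  · have hlim : Tendsto (fun n : ℕ => ENNReal.ofReal (Real.exp (-β * (y - 1 / (n + 1)))))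
        atTop (nhds (ENNReal.ofReal (Real.exp (-β * y)))) := by
      have h1 : Tendsto (fun n : ℕ => y - 1 / ((n : ℝ) + 1)) atTop (nhds y) := by
        simpa using tendsto_const_nhds.sub (tendsto_one_div_add_atTop_nhds_zero_nat (𝕜 := ℝ))
      exact (ENNReal.continuous_ofReal.tendsto _).comp
        ((Real.continuous_exp.tendsto _).comp (h1.const_mul (-β)))
    refine ge_of_tendsto hlim ?_
    have hev : ∀ᶠ n : ℕ in atTop, 1 / ((n : ℝ) + 1) < y :=
      tendsto_one_div_add_atTop_nhds_zero_nat.eventually (gt_mem_nhds hy)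
    filter_upwards [hev] with n hn
    have h0 : (0 : ℝ) ≤ y - 1 / (n + 1) := by linarith
    rw [← hexpX _ h0]
    apply measure_mono
    intro ω hω
    have hpos : (0:ℝ) < 1 / ((n:ℝ) + 1) := by positivity
    simp only [Set.mem_setOf_eq] at hω ⊢
    linarith

/-- Memorylessness gap bound. -/
lemma mpx_gap {Ω : Type*} [MeasurableSpace Ω] (μ : Measure Ω) [IsProbabilityMeasure μ]
    (β : ℝ) (hβ : 0 < β) (X Y : Ω → ℝ) (hX : Measurable X) (hY : Measurable Y)
    (hind : IndepFun Y X μ)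
    (hexpX : ∀ t : ℝ, 0 ≤ t → μ {ω | t < X ω} = ENNReal.ofReal (Real.exp (-β * t)))
    (t : ℝ) (ht : 0 ≤ t) :
    ENNReal.ofReal (Real.exp (-β * t)) * μ {ω | Y ω ≤ X ω} ≤ μ {ω | Y ω + t < X ω} := by
  set ν := μ.map X with hν
  set ρ := μ.map Y with hρ
  have hmap : μ.map (fun ω => (Y ω, X ω)) = ρ.prod ν :=
    (indepFun_iff_map_prod_eq_prod_map_map hY.aemeasurable hX.aemeasurable).mp hind
  haveI : IsProbabilityMeasure ν := Measure.isProbabilityMeasure_map hX.aemeasurable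
  haveI : IsProbabilityMeasure ρ := Measure.isProbabilityMeasure_map hY.aemeasurable
  have hνIoi : ∀ s : ℝ, 0 ≤ s → ν (Set.Ioi s) = ENNReal.ofReal (Real.exp (-β * s)) := by
    intro s hs
    rw [hν, Measure.map_apply hX measurableSet_Ioi]
    exact hexpX s hs
  have hνIci : ∀ s : ℝ, ν (Set.Ici s) ≤ ENNReal.ofReal (Real.exp (-β * s)) := by
    intro s
    rw [hν, Measure.map_apply hX measurableSet_Ici]
    exact mpx_tail_Ici μ β hβ X hexpX s
  -- rewrite both sides as integrals over ρ
  have hslice1 : μ {ω | Y ω + t < X ω} = ∫⁻ y, ν (Set.Ioi (y + t)) ∂ρ := by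
    have hms : MeasurableSet {p : ℝ × ℝ | p.1 + t < p.2} :=
      measurableSet_lt (measurable_fst.add_const t) measurable_snd
    have : μ {ω | Y ω + t < X ω} = (ρ.prod ν) {p : ℝ × ℝ | p.1 + t < p.2} := by
      rw [← hmap, Measure.map_apply (hY.prodMk hX) hms]
      rfl
    rw [this, Measure.prod_apply hms]
    congr 1

  have hslice0 : μ {ω | Y ω ≤ X ω} = ∫⁻ y, ν (Set.Ici y) ∂ρ := by
    have hms : MeasurableSet {p : ℝ × ℝ | p.1 ≤ p.2} :=
      measurableSet_le measurable_fst measurable_snd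
    have : μ {ω | Y ω ≤ X ω} = (ρ.prod ν) {p : ℝ × ℝ | p.1 ≤ p.2} := by
      rw [← hmap, Measure.map_apply (hY.prodMk hX) hms]
      rfl
    rw [this, Measure.prod_apply hms]
    congr 1

  have hpoint : ∀ y : ℝ, ENNReal.ofReal (Real.exp (-β * t)) * ν (Set.Ici y)
      ≤ ν (Set.Ioi (y + t)) := by
    intro y
    rcases le_or_gt 0 y with hy | hy
    · have hyt : (0:ℝ) ≤ y + t := by linarith
      rw [hνIoi _ hyt]
      calc ENNReal.ofReal (Real.exp (-β * t)) * ν (Set.Ici y)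
          ≤ ENNReal.ofReal (Real.exp (-β * t)) * ENNReal.ofReal (Real.exp (-β * y)) :=
            mul_le_mul_right (hνIci y) _
        _ = ENNReal.ofReal (Real.exp (-β * (y + t))) := by
            rw [← ENNReal.ofReal_mul (Real.exp_nonneg _), ← Real.exp_add]
            ring_nf
    · have h1 : ENNReal.ofReal (Real.exp (-β * t)) * ν (Set.Ici y)
          ≤ ENNReal.ofReal (Real.exp (-β * t)) := by
        calc ENNReal.ofReal (Real.exp (-β * t)) * ν (Set.Ici y)
            ≤ ENNReal.ofReal (Real.exp (-β * t)) * 1 := mul_le_mul_right prob_le_one _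
          _ = _ := mul_one _
      refine h1.trans ?_
      rcases le_or_gt 0 (y + t) with hyt | hyt
      · rw [hνIoi _ hyt]
        apply ENNReal.ofReal_le_ofReal
        apply Real.exp_le_exp.mpr
        nlinarith
      · calc ENNReal.ofReal (Real.exp (-β * t)) ≤ ENNReal.ofReal (Real.exp (-β * 0)) := by
              apply ENNReal.ofReal_le_ofReal
              apply Real.exp_le_exp.mpr
              nlinarith
          _ = ν (Set.Ioi 0) := (hνIoi 0 le_rfl).symm
          _ ≤ ν (Set.Ioi (y + t)) := measure_mono (Set.Ioi_subset_Ioi hyt.le)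
  calc ENNReal.ofReal (Real.exp (-β * t)) * μ {ω | Y ω ≤ X ω}
      = ∫⁻ y, ENNReal.ofReal (Real.exp (-β * t)) * ν (Set.Ici y) ∂ρ := by
        rw [hslice0, lintegral_const_mul' _ _ ENNReal.ofReal_ne_top]
    _ ≤ ∫⁻ y, ν (Set.Ioi (y + t)) ∂ρ := lintegral_mono hpoint
    _ = μ {ω | Y ω + t < X ω} := hslice1.symm

/-- bound for a single candidate center `u`. -/
lemma mpx_center_bound {V : Type*} [Fintype V] [DecidableEq V]
    {Ω : Type*} [MeasurableSpace Ω] (μ : Measure Ω) [IsProbabilityMeasure μ]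
    (β : ℝ) (hβ : 0 < β)
    (lam : V → Ω → ℝ) (hmeas : ∀ u, Measurable (lam u))
    (hindep : iIndepFun lam μ)
    (hexp : ∀ u, ∀ t : ℝ, 0 ≤ t →
      μ {ω | t < lam u ω} = ENNReal.ofReal (Real.exp (-β * t)))
    (a : V → ℝ) (u : V) (hne : ∃ u', u' ≠ u) (t : ℝ) (ht : 0 ≤ t) :
    ENNReal.ofReal (Real.exp (-β * t))
        * μ {ω | ∀ u', a u - lam u ω ≤ a u' - lam u' ω}
      ≤ μ {ω | ∀ u', u' ≠ u → a u - lam u ω + t < a u' - lam u' ω} := by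
  classical
  set S : Finset V := Finset.univ.erase u with hSdef
  have hS : S.Nonempty := by
    obtain ⟨u', hu'⟩ := hne
    exact ⟨u', Finset.mem_erase.mpr ⟨hu', Finset.mem_univ _⟩⟩
  have hS' : S.attach.Nonempty := Finset.attach_nonempty_iff.mpr hS
  set φ : (S → ℝ) → ℝ := S.attach.sup' hS' (fun i p => p i + a u - a (i : V)) with hφdef
  have hφapp : ∀ p : S → ℝ, φ p = S.attach.sup' hS' (fun i => p i + a u - a (i : V)) := by
    intro p
    rw [hφdef, Finset.sup'_apply]
  have hφmeas : Measurable φ :=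
    Finset.measurable_sup' hS' fun i _ =>
      ((measurable_pi_apply i).add_const _).sub_const _
  set Y : Ω → ℝ := fun ω => φ (fun i => lam i ω) with hYdef
  have hYmeas : Measurable Y :=
    hφmeas.comp (measurable_pi_lambda _ fun i => hmeas i)
  have hind : IndepFun Y (lam u) μ := by
    have h0 := hindep.indepFun_finset S {u}
      (Finset.disjoint_singleton_right.mpr (Finset.notMem_erase u _)) hmeas
    have h1 := h0.comp (φ := φ)
      (ψ := fun p : ({u} : Finset V) → ℝ => p ⟨u, Finset.mem_singleton_self u⟩)
      hφmeas (measurable_pi_apply _ :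
        Measurable fun p : ({u} : Finset V) → ℝ => p ⟨u, Finset.mem_singleton_self u⟩)
    exact h1
  have hsetW : {ω | ∀ u', a u - lam u ω ≤ a u' - lam u' ω} = {ω | Y ω ≤ lam u ω} := by
    ext ω
    simp only [Set.mem_setOf_eq, hYdef, hφapp, Finset.sup'_le_iff, Finset.mem_attach,
      forall_true_left, Subtype.forall]
    constructor
    · intro h i hi
      have := h i
      linarith
    · intro h u'
      rcases eq_or_ne u' u with rfl | hu'
      · linarith
      · have := h u' (Finset.mem_erase.mpr ⟨hu', Finset.mem_univ _⟩)
        linarith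
  have hsetE : {ω | ∀ u', u' ≠ u → a u - lam u ω + t < a u' - lam u' ω}
      = {ω | Y ω + t < lam u ω} := by
    ext ω
    simp only [Set.mem_setOf_eq, ← lt_sub_iff_add_lt, hYdef, hφapp, Finset.sup'_lt_iff,
      Finset.mem_attach,
      forall_true_left, Subtype.forall]
    constructor
    · intro h i hi
      have := h i (Finset.ne_of_mem_erase hi)
      linarith
    · intro h u' hu'
      have := h u' (Finset.mem_erase.mpr ⟨hu', Finset.mem_univ _⟩)
      linarith
  rw [hsetW, hsetE]
  exact mpx_gap μ β hβ (lam u) Y (hmeas u) hYmeas hind (hexp u) t ht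

/-- MPX clustering: with independent exponential shifts of rate `β`, for every
vertex `v` and radius `k`, with probability at least `1 − 2βk` there is a
single vertex `u` that is the unique center (unique minimizer of the shifted
distance) of every vertex `w` with `dist(v, w) ≤ k`. -/
theorem mpx_cluster_probability {V : Type*} [Fintype V]
    (G : SimpleGraph V) (hconn : G.Connected)
    {Ω : Type*} [MeasurableSpace Ω] (μ : Measure Ω) [IsProbabilityMeasure μ]
    (β : ℝ) (hβ : 0 < β)
    (lam : V → Ω → ℝ) (hmeas : ∀ u, Measurable (lam u))
    (hindep : iIndepFun lam μ)
    (hexp : ∀ u, ∀ t : ℝ, 0 ≤ t →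
      μ {ω | t < lam u ω} = ENNReal.ofReal (Real.exp (-β * t))) :
    ∀ (v : V) (k : ℕ),
      ENNReal.ofReal (1 - 2 * β * k) ≤
        μ {ω | ∃ u : V, ∀ w : V, G.dist v w ≤ k →
          ∀ u' : V, u' ≠ u →
            (G.dist u w : ℝ) - lam u ω < (G.dist u' w : ℝ) - lam u' ω} := by
  classical
  intro v k
  rcases subsingleton_or_nontrivial V with hV | hV
  · have hU : {ω | ∃ u : V, ∀ w : V, G.dist v w ≤ k →
          ∀ u' : V, u' ≠ u →
            (G.dist u w : ℝ) - lam u ω < (G.dist u' w : ℝ) - lam u' ω} = Set.univ := by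
      ext ω
      simp only [Set.mem_setOf_eq, Set.mem_univ, iff_true]
      exact ⟨v, fun w _ u' hu' => absurd (Subsingleton.elim u' v) hu'⟩
    rw [hU, measure_univ]
    apply ENNReal.ofReal_le_one.mpr
    have : (0:ℝ) ≤ 2 * β * k := by positivity
    linarith
  · haveI : Nonempty V := inferInstance
    set a : V → ℝ := fun u => (G.dist u v : ℝ) with ha
    set t : ℝ := 2 * (k : ℝ) with htdef
    have ht : 0 ≤ t := by positivity
    set W : V → Set Ω := fun u => {ω | ∀ u', a u - lam u ω ≤ a u' - lam u' ω} with hW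
    set E : V → Set Ω := fun u =>
      {ω | ∀ u', u' ≠ u → a u - lam u ω + t < a u' - lam u' ω} with hE
    set c : ENNReal := ENNReal.ofReal (Real.exp (-β * t)) with hc
    have hbound : ∀ u : V, c * μ (W u) ≤ μ (E u) := fun u =>
      mpx_center_bound μ β hβ lam hmeas hindep hexp a u (exists_ne u) t ht
    have hEmeas : ∀ u, MeasurableSet (E u) := by
      intro u
      have : E u = ⋂ (u' : V) (_ : u' ≠ u),
          {ω | a u - lam u ω + t < a u' - lam u' ω} := by
        ext ω; simp [hE]
      rw [this]
      refine MeasurableSet.iInter fun u' => MeasurableSet.iInter fun _ => ?_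
      exact measurableSet_lt ((measurable_const.sub (hmeas u)).add_const t)
        (measurable_const.sub (hmeas u'))
    have hdisj : Pairwise (Function.onFun Disjoint E) := by
      intro u u'' huu
      rw [Function.onFun, Set.disjoint_left]
      intro ω h1 h2
      have ha1 := h1 u'' (Ne.symm huu)
      have ha2 := h2 u huu
      linarith
    have hWcover : Set.univ ⊆ ⋃ u, W u := by
      intro ω _
      obtain ⟨u, -, hu⟩ := Finset.exists_min_image Finset.univ
        (fun u => a u - lam u ω) Finset.univ_nonempty
      exact Set.mem_iUnion.mpr ⟨u, fun u' => hu u' (Finset.mem_univ _)⟩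
    have hEsub : ∀ u, E u ⊆ {ω | ∃ u : V, ∀ w : V, G.dist v w ≤ k →
          ∀ u' : V, u' ≠ u →
            (G.dist u w : ℝ) - lam u ω < (G.dist u' w : ℝ) - lam u' ω} := by
      intro u ω hω
      refine ⟨u, fun w hw u' hu' => ?_⟩
      have hgap := hω u' hu'
      have h1 : G.dist u w ≤ G.dist u v + G.dist v w := hconn.dist_triangle
      have h2 : G.dist u' v ≤ G.dist u' w + G.dist w v := hconn.dist_triangle
      have hcomm : G.dist w v = G.dist v w := SimpleGraph.dist_comm
      rw [hcomm] at h2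
      have h1' : (G.dist u w : ℝ) ≤ (G.dist u v : ℝ) + (G.dist v w : ℝ) := by
        exact_mod_cast h1
      have h2' : (G.dist u' v : ℝ) ≤ (G.dist u' w : ℝ) + (G.dist v w : ℝ) := by
        exact_mod_cast h2
      have hw' : (G.dist v w : ℝ) ≤ (k : ℝ) := by exact_mod_cast hw
      simp only [ha] at hgap
      rw [htdef] at hgap
      linarith
    calc ENNReal.ofReal (1 - 2 * β * k)
        ≤ c := by
          rw [hc]
          apply ENNReal.ofReal_le_ofReal
          have := Real.add_one_le_exp (-β * t)
          rw [htdef] at this ⊢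
          linarith
      _ = c * μ Set.univ := by rw [measure_univ, mul_one]
      _ ≤ c * μ (⋃ u, W u) := mul_le_mul_right (measure_mono hWcover) _
      _ ≤ c * ∑' u, μ (W u) := mul_le_mul_right (measure_iUnion_le W) _
      _ = ∑' u, c * μ (W u) := ENNReal.tsum_mul_left.symm
      _ ≤ ∑' u, μ (E u) := ENNReal.tsum_le_tsum hbound
      _ = μ (⋃ u, E u) := (measure_iUnion hdisj hEmeas).symm
      _ ≤ _ := measure_mono (Set.iUnion_subset hEsub)
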